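/- Let C ⊆ F_q^n be a linear code of dimension k ≥ 1 and let 1 ≤ m ≤ k. Then the m-th generalized Hamming weight satisfies d_m(C) ≥ d_1(C) · (q^m - 1)/(q^m - q^{m-1}). -/

import Mathlib

open Filter Topology

/-- The support size of a subcode `D ⊆ F^n`: number of coordinates where some
codeword of `D` is nonzero. -/
noncomputable def codeSupp {F : Type} [Field F] {n : ℕ}
    (D : Submodule F (Fin n → F)) : ℕ :=
  Set.ncard {i : Fin n | ∃ d ∈ D, d i ≠ 0}

/-- The `m`-th relative generalized Hamming weight of a nested pair `C2 ⊆ C1`. -/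
noncomputable def RGHW {F : Type} [Field F] {n : ℕ}
    (m : ℕ) (C1 C2 : Submodule F (Fin n → F)) : ℕ :=
  sInf {w : ℕ | ∃ D : Submodule F (Fin n → F),
    D ≤ C1 ∧ Module.finrank F ↥D = m ∧ D ⊓ C2 = ⊥ ∧ codeSupp D = w}

/-- The `m`-th generalized Hamming weight of a code `C`. -/
noncomputable def GHW {F : Type} [Field F] {n : ℕ}
    (m : ℕ) (C : Submodule F (Fin n → F)) : ℕ :=
  RGHW m C ⊥

/-- The dual code with respect to the standard bilinear form. -/
def dualCode {F : Type} [Field F] {n : ℕ}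
    (C : Submodule F (Fin n → F)) : Submodule F (Fin n → F) where
  carrier := {y | ∀ x ∈ C, ∑ i, x i * y i = 0}
  add_mem' := by
    intro a b ha hb x hx
    simp only [Set.mem_setOf_eq] at *
    simp only [Pi.add_apply, mul_add, Finset.sum_add_distrib, ha x hx, hb x hx, add_zero]
  zero_mem' := by
    intro x hx; simp
  smul_mem' := by
    intro c a ha x hx
    simp only [Set.mem_setOf_eq] at *
    simp only [Pi.smul_apply, smul_eq_mul, mul_left_comm, ← Finset.mul_sum, ha x hx, mul_zero]

/-- The subspace `V_I` of vectors supported on the coordinate set `I`. -/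
def VI (F : Type) [Field F] {n : ℕ} (I : Finset (Fin n)) : Submodule F (Fin n → F) where
  carrier := {x | ∀ i, i ∉ I → x i = 0}
  add_mem' := by intro a b ha hb i hi; simp [ha i hi, hb i hi]
  zero_mem' := by intro i hi; rfl
  smul_mem' := by intro c a ha i hi; simp [ha i hi]

/-- The relative dimension length profile `K_d(C1, C2)`. -/
noncomputable def RDLP {F : Type} [Field F] {n : ℕ}
    (d : ℕ) (C1 C2 : Submodule F (Fin n → F)) : ℕ :=
  sSup {k : ℕ | ∃ I : Finset (Fin n), I.card = d ∧
    Module.finrank F ↥(C1 ⊓ VI F I) - Module.finrank F ↥(C2 ⊓ VI F I) = k}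

/- ======================= Auxiliary material ======================= -/

open Finset

attribute [local instance 10] Classical.propDecidable

/-- Hamming weight of a vector, as a `Finset` cardinality. -/
noncomputable def wtN {F : Type} [Field F] {n : ℕ} (c : Fin n → F) : ℕ :=
  (Finset.univ.filter (fun i => c i ≠ 0)).card

lemma ncard_setOf {n : ℕ} (p : Fin n → Prop) [DecidablePred p] :
    Set.ncard {i : Fin n | p i} = (Finset.univ.filter p).card := by
  rw [Set.ncard_eq_toFinset_card']
  congr 1
  ext i
  simp

lemma codeSupp_span_singleton {F : Type} [Field F] {n : ℕ} (c : Fin n → F) :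
    codeSupp (Submodule.span F {c}) = wtN c := by
  have hset : {i : Fin n | ∃ d ∈ Submodule.span F {c}, d i ≠ 0} = {i : Fin n | c i ≠ 0} := by
    ext i
    simp only [Set.mem_setOf_eq]
    constructor
    · rintro ⟨d, hd, hdi⟩
      obtain ⟨a, rfl⟩ := Submodule.mem_span_singleton.mp hd
      intro h
      apply hdi
      simp [h]
    · intro h
      exact ⟨c, Submodule.mem_span_singleton_self c, h⟩
  unfold codeSupp wtN
  rw [hset, ncard_setOf]

lemma GHW_one_le_wtN {F : Type} [Field F] {n : ℕ} {C : Submodule F (Fin n → F)}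
    {c : Fin n → F} (hcC : c ∈ C) (hc : c ≠ 0) :
    GHW 1 C ≤ wtN c := by
  unfold GHW RGHW
  apply Nat.sInf_le
  refine ⟨Submodule.span F {c}, ?_, finrank_span_singleton hc, inf_bot_eq _,
    codeSupp_span_singleton c⟩
  rw [Submodule.span_le]
  simpa using hcC

lemma card_functional_ne {F : Type} [Field F] [Fintype F]
    {M : Type} [AddCommGroup M] [Module F M] [Fintype M]
    {m : ℕ} (hm : Module.finrank F M = m) (hm1 : 1 ≤ m) (φ : M →ₗ[F] F) (hφ : φ ≠ 0) :
    Fintype.card {x : M // φ x ≠ 0} = Fintype.card F ^ m - Fintype.card F ^ (m - 1) := by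
  have hFD : FiniteDimensional F M := Module.Finite.of_finite
  have hrange : Module.finrank F (LinearMap.range φ) = 1 := by
    have h1 : LinearMap.range φ ≠ ⊥ := by
      intro h; exact hφ (LinearMap.range_eq_bot.mp h)
    have hle : Module.finrank F (LinearMap.range φ) ≤ 1 := by
      simpa using Submodule.finrank_le (LinearMap.range φ)
    have hpos : 0 < Module.finrank F (LinearMap.range φ) := by
      rw [Module.finrank_pos_iff]
      exact Submodule.nontrivial_iff_ne_bot.mpr h1
    omega
  have hker : Module.finrank F (LinearMap.ker φ) = m - 1 := by
    have := LinearMap.finrank_range_add_finrank_ker φ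
    rw [hrange, hm] at this
    omega
  have hcardker : Fintype.card {x : M // φ x = 0} = Fintype.card F ^ (m - 1) := by
    have h2 : Fintype.card (LinearMap.ker φ) = Fintype.card F ^ (m - 1) := by
      rw [Module.card_eq_pow_finrank (K := F), hker]
    rw [← h2]
    exact Fintype.card_congr (Equiv.subtypeEquivRight (fun x => (LinearMap.mem_ker).symm))
  have htot : Fintype.card M = Fintype.card F ^ m := by
    rw [Module.card_eq_pow_finrank (K := F), hm]
  rw [Fintype.card_subtype_compl, hcardker, htot]

lemma exists_le_finrank_eq {F : Type} [Field F] {n : ℕ} (C : Submodule F (Fin n → F)) {m : ℕ}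
    (hm : m ≤ Module.finrank F ↥C) :
    ∃ D : Submodule F (Fin n → F), D ≤ C ∧ Module.finrank F ↥D = m := by
  have hFD : FiniteDimensional F ↥C := inferInstance
  let b := Module.finBasis F ↥C
  let fam : Fin m → (Fin n → F) := fun i => ((b (Fin.castLE hm i) : ↥C) : Fin n → F)
  have hli : LinearIndependent F fam := by
    have h1 : LinearIndependent F (fun i : Fin m => b (Fin.castLE hm i)) :=
      b.linearIndependent.comp _ (Fin.castLE_injective hm)
    exact h1.map' C.subtype (Submodule.ker_subtype C)
  refine ⟨Submodule.span F (Set.range fam), ?_, ?_⟩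
  · rw [Submodule.span_le]
    rintro _ ⟨i, rfl⟩
    exact (b (Fin.castLE hm i)).2
  · rw [finrank_span_eq_card hli, Fintype.card_fin]

set_option maxHeartbeats 1600000 in
/-- For a linear code `C ⊆ F_q^n` of dimension `k ≥ 1` and `1 ≤ m ≤ k`,
`d_m(C) ≥ d_1(C) · (q^m - 1)/(q^m - q^(m-1))`. -/
theorem ghw_ge_first_ghw_ratio {F : Type} [Field F] [Fintype F] {n k m : ℕ}
    (C : Submodule F (Fin n → F)) (hk : Module.finrank F ↥C = k)
    (hk1 : 1 ≤ k) (hm1 : 1 ≤ m) (hmk : m ≤ k) :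
    (GHW m C : ℝ) ≥ (GHW 1 C : ℝ) *
      (((Fintype.card F : ℝ) ^ m - 1) /
        ((Fintype.card F : ℝ) ^ m - (Fintype.card F : ℝ) ^ (m - 1))) := by
  have hq : 1 < Fintype.card F := Fintype.one_lt_card
  set q : ℕ := Fintype.card F with hqdef
  clear_value q
  -- the set defining `GHW m C` is nonempty, so the infimum is attained
  have hmk' : m ≤ Module.finrank F ↥C := by rw [hk]; exact hmk
  obtain ⟨D0, hD0C, hD0rank⟩ := exists_le_finrank_eq C hmk'
  have hne : {w : ℕ | ∃ D : Submodule F (Fin n → F),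
      D ≤ C ∧ Module.finrank F ↥D = m ∧ D ⊓ (⊥ : Submodule F (Fin n → F)) = ⊥ ∧
      codeSupp D = w}.Nonempty :=
    ⟨codeSupp D0, D0, hD0C, hD0rank, inf_bot_eq _, rfl⟩
  have hmem : GHW m C ∈ {w : ℕ | ∃ D : Submodule F (Fin n → F),
      D ≤ C ∧ Module.finrank F ↥D = m ∧ D ⊓ (⊥ : Submodule F (Fin n → F)) = ⊥ ∧
      codeSupp D = w} := by
    unfold GHW RGHW
    exact Nat.sInf_mem hne
  obtain ⟨D, hDC, hDrank, -, hDsupp⟩ := hmem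
  haveI : Fintype ↥D := Fintype.ofFinite _
  have hcardD : Fintype.card ↥D = q ^ m := by
    rw [Module.card_eq_pow_finrank (K := F), hDrank, hqdef]
  -- column counts
  have hcol : ∀ i : Fin n, (∃ d ∈ D, d i ≠ 0) →
      (univ.filter (fun c : ↥D => (c : Fin n → F) i ≠ 0)).card = q ^ m - q ^ (m - 1) := by
    intro i hi
    obtain ⟨d, hdD, hdi⟩ := hi
    set φ : ↥D →ₗ[F] F := (LinearMap.proj i).comp D.subtype with hφdef
    have hφne : φ ≠ 0 := by
      intro h
      apply hdi
      have h2 := congrArg (fun ψ : ↥D →ₗ[F] F => ψ ⟨d, hdD⟩) h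
      simpa [hφdef] using h2
    have hcf := card_functional_ne hDrank hm1 φ hφne
    have hfe : (univ.filter (fun c : ↥D => (c : Fin n → F) i ≠ 0)) =
        (univ.filter (fun c : ↥D => φ c ≠ 0)) := by
      apply Finset.filter_congr
      intro c _
      simp [hφdef]
    rw [hfe, ← Fintype.card_subtype, hcf, hqdef]
  -- double counting
  have hsupp : codeSupp D = (univ.filter (fun i : Fin n => ∃ d ∈ D, d i ≠ 0)).card :=
    ncard_setOf _
  have hsum : ∑ c : ↥D, wtN (c : Fin n → F) = codeSupp D * (q ^ m - q ^ (m - 1)) := by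
    unfold wtN
    calc ∑ c : ↥D, (univ.filter (fun i => (c : Fin n → F) i ≠ 0)).card
        = ∑ c : ↥D, ∑ i : Fin n, if (c : Fin n → F) i ≠ 0 then 1 else 0 := by
          simp [Finset.card_filter]
      _ = ∑ i : Fin n, ∑ c : ↥D, if (c : Fin n → F) i ≠ 0 then 1 else 0 := Finset.sum_comm
      _ = ∑ i : Fin n, (univ.filter (fun c : ↥D => (c : Fin n → F) i ≠ 0)).card := by
          simp [Finset.card_filter]
      _ = ∑ i ∈ univ.filter (fun i : Fin n => ∃ d ∈ D, d i ≠ 0),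
            (univ.filter (fun c : ↥D => (c : Fin n → F) i ≠ 0)).card := by
          refine (Finset.sum_subset (Finset.filter_subset _ _) ?_).symm
          intro i _ hi
          simp only [Finset.mem_filter, Finset.mem_univ, true_and] at hi
          push_neg at hi
          rw [Finset.card_eq_zero, Finset.filter_eq_empty_iff]
          intro c _
          simpa using hi c c.2
      _ = ∑ _i ∈ univ.filter (fun i : Fin n => ∃ d ∈ D, d i ≠ 0), (q ^ m - q ^ (m - 1)) := by
          apply Finset.sum_congr rfl
          intro i hi
          simp only [Finset.mem_filter, Finset.mem_univ, true_and] at hi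
          exact hcol i hi
      _ = codeSupp D * (q ^ m - q ^ (m - 1)) := by
          rw [Finset.sum_const, smul_eq_mul, hsupp]
  -- lower bound via minimum distance
  have hlow : (q ^ m - 1) * GHW 1 C ≤ ∑ c : ↥D, wtN (c : Fin n → F) := by
    have hwt0 : wtN ((0 : ↥D) : Fin n → F) = 0 := by
      unfold wtN
      rw [Finset.card_eq_zero, Finset.filter_eq_empty_iff]
      intro i _
      simp
    have h0 : ∑ c ∈ univ.erase (0 : ↥D), wtN (c : Fin n → F)
        = ∑ c : ↥D, wtN (c : Fin n → F) := Finset.sum_erase _ hwt0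
    have hcards : (univ.erase (0 : ↥D)).card = q ^ m - 1 := by
      rw [Finset.card_erase_of_mem (Finset.mem_univ _), Finset.card_univ, hcardD]
    calc (q ^ m - 1) * GHW 1 C
        = ∑ _c ∈ univ.erase (0 : ↥D), GHW 1 C := by
          rw [Finset.sum_const, smul_eq_mul, hcards]
      _ ≤ ∑ c ∈ univ.erase (0 : ↥D), wtN (c : Fin n → F) := by
          apply Finset.sum_le_sum
          intro c hc
          have hc0 : c ≠ 0 := Finset.ne_of_mem_erase hc
          have hc0' : (c : Fin n → F) ≠ 0 := by
            simpa [Submodule.coe_eq_zero] using hc0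
          exact GHW_one_le_wtN (hDC c.2) hc0'
      _ = ∑ c : ↥D, wtN (c : Fin n → F) := h0
  have hkey : (q ^ m - 1) * GHW 1 C ≤ GHW m C * (q ^ m - q ^ (m - 1)) := by
    calc (q ^ m - 1) * GHW 1 C ≤ ∑ c : ↥D, wtN (c : Fin n → F) := hlow
      _ = codeSupp D * (q ^ m - q ^ (m - 1)) := hsum
      _ = GHW m C * (q ^ m - q ^ (m - 1)) := by rw [hDsupp]
  -- pass to the reals
  have hq1 : 0 < q := lt_of_lt_of_le Nat.zero_lt_one hq.le
  have hmm : m - 1 < m := Nat.pred_lt (Nat.one_le_iff_ne_zero.mp hm1)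
  have h1 : (1 : ℕ) ≤ q ^ m := Nat.one_le_pow m q hq1
  have h2 : q ^ (m - 1) ≤ q ^ m := Nat.pow_le_pow_right hq1 (le_of_lt hmm)
  have h3 : q ^ (m - 1) < q ^ m := Nat.pow_lt_pow_right hq hmm
  have hq0 : (0 : ℝ) < (q : ℝ) ^ m - (q : ℝ) ^ (m - 1) := by
    rw [sub_pos]
    exact_mod_cast h3
  rw [ge_iff_le, ← mul_div_assoc, div_le_iff₀ hq0]
  have hcast : ((q ^ m - 1 : ℕ) : ℝ) * (GHW 1 C : ℝ) ≤
      (GHW m C : ℝ) * ((q ^ m - q ^ (m - 1) : ℕ) : ℝ) := by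
    exact_mod_cast hkey
  rw [Nat.cast_sub h1, Nat.cast_sub h2] at hcast
  push_cast at hcast ⊢
  linarith
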